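/- Let y_t ∈ ℂ with Re[y_t] > 0 and consider the real symmetric 6×6 block matrix G_{YgΔ} = [[Re[Y1], Re[Y3]], [Re[Y3]ᵀ, Re[Y2]]], where Y1 = y_t·I₃, Y2 = (y_t/3)·[[2,−1,−1],[−1,2,−1],[−1,−1,2]], and Y3 = (y_t/√3)·[[−1,1,0],[0,−1,1],[1,0,−1]]. Then G_{YgΔ} is positive semidefinite and its set of eigenvalues equals {0, Re[y_t], 2·Re[y_t]}. -/

import Mathlib

open Matrix

private def Amat : Matrix (Fin 3) (Fin 3) ℝ := !![(-1:ℝ),1,0;0,-1,1;1,0,-1]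
private def Bmat : Matrix (Fin 3) (Fin 3) ℝ := !![(2:ℝ),-1,-1;-1,2,-1;-1,-1,2]

private noncomputable def Gm (r s : ℝ) : Matrix (Fin 3 ⊕ Fin 3) (Fin 3 ⊕ Fin 3) ℝ :=
  fromBlocks (r • 1) ((r*s/3) • Amat) ((r*s/3) • Amatᵀ) ((r/3) • Bmat)

private lemma hAAt : Amat * Amatᵀ = Bmat := by
  ext i j; fin_cases i <;> fin_cases j <;>
    norm_num [Amat, Bmat, Matrix.mul_apply, Fin.sum_univ_three, Matrix.transpose_apply,
      Matrix.vecHead, Matrix.vecTail, Matrix.cons_val_two]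

private lemma hAtA : Amatᵀ * Amat = Bmat := by
  ext i j; fin_cases i <;> fin_cases j <;>
    norm_num [Amat, Bmat, Matrix.mul_apply, Fin.sum_univ_three, Matrix.transpose_apply,
      Matrix.vecHead, Matrix.vecTail, Matrix.cons_val_two]

private lemma hAB : Amat * Bmat = (3:ℝ) • Amat := by
  ext i j; fin_cases i <;> fin_cases j <;>
    norm_num [Amat, Bmat, Matrix.mul_apply, Fin.sum_univ_three, Matrix.transpose_apply,
      Matrix.vecHead, Matrix.vecTail, Matrix.cons_val_two]

private lemma hBA : Bmat * Amat = (3:ℝ) • Amat := by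
  ext i j; fin_cases i <;> fin_cases j <;>
    norm_num [Amat, Bmat, Matrix.mul_apply, Fin.sum_univ_three, Matrix.transpose_apply,
      Matrix.vecHead, Matrix.vecTail, Matrix.cons_val_two]

private lemma hAtB : Amatᵀ * Bmat = (3:ℝ) • Amatᵀ := by
  ext i j; fin_cases i <;> fin_cases j <;>
    norm_num [Amat, Bmat, Matrix.mul_apply, Fin.sum_univ_three, Matrix.transpose_apply,
      Matrix.vecHead, Matrix.vecTail, Matrix.cons_val_two]

private lemma hBAt : Bmat * Amatᵀ = (3:ℝ) • Amatᵀ := by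
  ext i j; fin_cases i <;> fin_cases j <;>
    norm_num [Amat, Bmat, Matrix.mul_apply, Fin.sum_univ_three, Matrix.transpose_apply,
      Matrix.vecHead, Matrix.vecTail, Matrix.cons_val_two]

private lemma hBB : Bmat * Bmat = (3:ℝ) • Bmat := by
  ext i j; fin_cases i <;> fin_cases j <;>
    norm_num [Amat, Bmat, Matrix.mul_apply, Fin.sum_univ_three, Matrix.transpose_apply,
      Matrix.vecHead, Matrix.vecTail, Matrix.cons_val_two]

private lemma smul_one_block (t : ℝ) :
    t • (1 : Matrix (Fin 3 ⊕ Fin 3) (Fin 3 ⊕ Fin 3) ℝ) =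
      fromBlocks (t • 1) 0 0 (t • 1) := by
  rw [← fromBlocks_one, Matrix.fromBlocks_smul]; simp

private lemma fromBlocks_sub' (A B C D A' B' C' D' : Matrix (Fin 3) (Fin 3) ℝ) :
    fromBlocks A B C D - fromBlocks A' B' C' D' =
      fromBlocks (A - A') (B - B') (C - C') (D - D') := by
  simp [sub_eq_add_neg, Matrix.fromBlocks_neg, Matrix.fromBlocks_add]

private lemma Gm_cubic (r s : ℝ) (hs : s^2 = 3) :
    Gm r s * (Gm r s - r • 1) * (Gm r s - (2*r) • 1) = 0 := by
  rw [Gm, smul_one_block r, smul_one_block (2*r), fromBlocks_sub', fromBlocks_sub',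
    fromBlocks_multiply, fromBlocks_multiply, ← fromBlocks_zero, fromBlocks_inj]
  refine ⟨?_, ?_, ?_, ?_⟩ <;>
    · simp only [Matrix.smul_mul, Matrix.mul_smul, Matrix.sub_mul, Matrix.mul_sub,
        Matrix.add_mul, Matrix.mul_add,
        Matrix.one_mul, Matrix.mul_one, hAAt, hAtA, hAB, hBA, hAtB, hBAt, hBB,
        smul_smul, smul_sub, smul_add, sub_zero, zero_sub, Matrix.mul_zero, Matrix.zero_mul,
        add_zero, zero_add, smul_zero, neg_smul, smul_neg]
      match_scalars <;>
        first
        | ring1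
        | linear_combination (r^3*s/9) * hs
        | linear_combination (-(r^3*s)/9) * hs
        | linear_combination (r^3*s/3) * hs
        | linear_combination (-(r^3*s)/3) * hs

private lemma Gm_eig0 (r s : ℝ) :
    Gm r s *ᵥ (Sum.elim ![0,0,0] ![1,1,1]) = (0 : Fin 3 ⊕ Fin 3 → ℝ) := by
  funext i
  rcases i with i | i <;> fin_cases i <;>
    norm_num [Gm, Amat, Bmat, Matrix.mulVec, dotProduct, Fintype.sum_sum_type,
        Fin.sum_univ_three, Matrix.one_apply, Matrix.transpose_apply, Matrix.vecHead,
        Matrix.vecTail, Matrix.cons_val_two] <;>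
    ring

private lemma Gm_eig1 (r s : ℝ) :
    Gm r s *ᵥ (Sum.elim ![1,1,1] ![0,0,0]) = r • Sum.elim ![1,1,1] ![0,0,0] := by
  funext i
  rcases i with i | i <;> fin_cases i <;>
    norm_num [Gm, Amat, Bmat, Matrix.mulVec, dotProduct, Fintype.sum_sum_type,
        Fin.sum_univ_three, Matrix.one_apply, Matrix.transpose_apply, Matrix.vecHead,
        Matrix.vecTail, Matrix.cons_val_two] <;>
    ring

private lemma Gm_eig2 (r s : ℝ) (hs : s^2 = 3) :
    Gm r s *ᵥ (Sum.elim ![s,-s,0] ![-1,2,-1]) =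
      (2*r) • Sum.elim ![s,-s,0] ![-1,2,-1] := by
  funext i
  rcases i with i | i <;> fin_cases i <;>
    norm_num [Gm, Amat, Bmat, Matrix.mulVec, dotProduct, Fintype.sum_sum_type,
        Fin.sum_univ_three, Matrix.one_apply, Matrix.transpose_apply, Matrix.vecHead,
        Matrix.vecTail, Matrix.cons_val_two] <;>
    first
      | ring1
      | linear_combination (-(r/3)) * hs
      | linear_combination (r/3) * hs
      | linear_combination (2*r/3) * hs
      | linear_combination (-(2*r)/3) * hs
      | linear_combination (r*s/3) * hs
      | linear_combination (-(r*s)/3) * hs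
      | linear_combination r * hs
      | linear_combination (-r) * hs

set_option maxHeartbeats 1000000 in
private lemma Gm_psd (r s : ℝ) (hr : 0 ≤ r) (hs : s^2 = 3) (x : Fin 3 ⊕ Fin 3 → ℝ) :
    0 ≤ x ⬝ᵥ (Gm r s *ᵥ x) := by
  have e0 : r * (s^2 * (x (Sum.inl 0))^2) = 3*r*(x (Sum.inl 0))^2 := by rw [hs]; ring
  have e1 : r * (s^2 * (x (Sum.inl 1))^2) = 3*r*(x (Sum.inl 1))^2 := by rw [hs]; ring
  have e2 : r * (s^2 * (x (Sum.inl 2))^2) = 3*r*(x (Sum.inl 2))^2 := by rw [hs]; ring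
  simp only [Gm, dotProduct, Matrix.mulVec, Fintype.sum_sum_type,
    Fin.sum_univ_three, Matrix.fromBlocks_apply₁₁, Matrix.fromBlocks_apply₁₂,
    Matrix.fromBlocks_apply₂₁, Matrix.fromBlocks_apply₂₂, Matrix.smul_apply,
    Matrix.one_apply, Matrix.transpose_apply, smul_eq_mul]
  norm_num [Amat, Bmat, Matrix.vecHead, Matrix.vecTail, Fin.ext_iff, Matrix.cons_val_two]
  nlinarith [mul_nonneg hr (sq_nonneg (s * x (Sum.inl 0) - x (Sum.inr 0) + x (Sum.inr 1))),
    mul_nonneg hr (sq_nonneg (s * x (Sum.inl 1) - x (Sum.inr 1) + x (Sum.inr 2))),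
    mul_nonneg hr (sq_nonneg (s * x (Sum.inl 2) + x (Sum.inr 0) - x (Sum.inr 2))),
    e0, e1, e2]

/-- Eigenvalue claim in the proof of Theorem 2 for the wye-grounded--delta block
`G_{YgΔ} = [[Re Y1, Re Y3], [Re Y3ᵀ, Re Y2]]`: it is positive semidefinite with
eigenvalues `{0, Re[y_t], 2 Re[y_t]}`. -/
theorem G_YgDelta_psd_spectrum (yt : ℂ) (h : 0 < yt.re)
    (Y1 Y2 Y3 : Matrix (Fin 3) (Fin 3) ℂ)
    (hY1 : Y1 = yt • (1 : Matrix (Fin 3) (Fin 3) ℂ))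
    (hY2 : Y2 = (yt / 3) • !![(2 : ℂ), -1, -1; -1, 2, -1; -1, -1, 2])
    (hY3 : Y3 = (yt / (Real.sqrt 3 : ℂ)) • !![(-1 : ℂ), 1, 0; 0, -1, 1; 1, 0, -1])
    (G : Matrix (Fin 3 ⊕ Fin 3) (Fin 3 ⊕ Fin 3) ℝ)
    (hG : G = Matrix.fromBlocks (Y1.map Complex.re) (Y3.map Complex.re)
      ((Y3.map Complex.re)ᵀ) (Y2.map Complex.re)) :
    (∀ x : Fin 3 ⊕ Fin 3 → ℝ, 0 ≤ x ⬝ᵥ (G *ᵥ x)) ∧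
      spectrum ℝ G = {0, yt.re, 2 * yt.re} := by
  have hs3 : Real.sqrt 3 * Real.sqrt 3 = 3 :=
    Real.mul_self_sqrt (by norm_num)
  have hs : (Real.sqrt 3)^2 = 3 := by rw [sq]; exact hs3
  set r := yt.re with hr
  set s := Real.sqrt 3 with hsdef
  -- G equals the real model matrix
  have hGm : G = Gm r s := by
    subst hG hY1 hY2 hY3
    ext i j
    rcases i with i | i <;> rcases j with j | j <;> fin_cases i <;> fin_cases j <;>
      norm_num [Gm, Amat, Bmat, Matrix.one_apply, Complex.div_re, Complex.mul_re,
          Complex.normSq_apply, hs3, hr, Matrix.transpose_apply, Matrix.vecHead,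
          Matrix.vecTail, Fin.ext_iff] <;>
      ring
  have hcub : G * (G - r • 1) * (G - (2*r) • 1) = 0 := by
    rw [hGm]; exact Gm_cubic r s hs
  have hchar : ∀ μ : ℝ, μ ∈ spectrum ℝ G ↔
      ∃ v : Fin 3 ⊕ Fin 3 → ℝ, v ≠ 0 ∧ G *ᵥ v = μ • v := by
    intro μ
    rw [spectrum.mem_iff, Matrix.isUnit_iff_isUnit_det, isUnit_iff_ne_zero, not_not,
      ← Matrix.exists_mulVec_eq_zero_iff]
    constructor
    · rintro ⟨v, hv0, hv⟩
      refine ⟨v, hv0, ?_⟩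
      rw [Algebra.algebraMap_eq_smul_one, Matrix.sub_mulVec, Matrix.smul_mulVec,
        Matrix.one_mulVec, sub_eq_zero] at hv
      exact hv.symm
    · rintro ⟨v, hv0, hv⟩
      refine ⟨v, hv0, ?_⟩
      rw [Algebra.algebraMap_eq_smul_one, Matrix.sub_mulVec, Matrix.smul_mulVec,
        Matrix.one_mulVec, hv, sub_self]
  constructor
  · -- positive semidefiniteness
    intro x
    rw [hGm]
    exact Gm_psd r s h.le hs x
  · -- the spectrum
    ext μ
    simp only [Set.mem_insert_iff, Set.mem_singleton_iff]
    constructor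
    · intro hμ
      obtain ⟨v, hv0, hv⟩ := (hchar μ).1 hμ
      have h1 : (G - r • 1) *ᵥ v = (μ - r) • v := by
        rw [Matrix.sub_mulVec, hv, Matrix.smul_mulVec, Matrix.one_mulVec, sub_smul]
      have h2 : (G - (2*r) • 1) *ᵥ v = (μ - 2*r) • v := by
        rw [Matrix.sub_mulVec, hv, Matrix.smul_mulVec, Matrix.one_mulVec, sub_smul]
      have h3 : ((μ - 2*r) * (μ - r) * μ) • v = 0 := by
        have hcv := congrArg (fun M => M *ᵥ v) hcub
        simp only [Matrix.zero_mulVec] at hcv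
        rw [← Matrix.mulVec_mulVec, h2, Matrix.mulVec_smul, ← Matrix.mulVec_mulVec, h1,
          Matrix.mulVec_smul, hv, smul_smul, smul_smul] at hcv
        exact hcv
      rcases smul_eq_zero.mp h3 with hz | hz
      · rcases mul_eq_zero.mp hz with hz2 | h0
        · rcases mul_eq_zero.mp hz2 with hb | ha
          · have := sub_eq_zero.mp hb
            exact Or.inr (Or.inr (by linarith))
          · have := sub_eq_zero.mp ha
            exact Or.inr (Or.inl (by linarith))
        · exact Or.inl h0
      · exact absurd hz hv0
    · rintro (rfl | rfl | rfl)
      · refine (hchar 0).2 ⟨Sum.elim ![0,0,0] ![1,1,1], ?_, ?_⟩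
        · intro hcon
          have := congrFun hcon (Sum.inr 0)
          simpa using this
        · rw [hGm, zero_smul]
          exact Gm_eig0 r s
      · refine (hchar r).2 ⟨Sum.elim ![1,1,1] ![0,0,0], ?_, ?_⟩
        · intro hcon
          have := congrFun hcon (Sum.inl 0)
          simpa using this
        · rw [hGm]
          exact Gm_eig1 r s
      · refine (hchar (2*r)).2 ⟨Sum.elim ![s,-s,0] ![-1,2,-1], ?_, ?_⟩
        · intro hcon
          have := congrFun hcon (Sum.inr 1)
          simpa using this
        · rw [hGm]
          exact Gm_eig2 r s hs
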